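/- Let x_1 ≥ x_2 ≥ ... ≥ x_n ≥ 0 be real numbers with sum 1, let 1 ≤ k ≤ n, let γ = (1/k)·∑_{j=k+1}^n x_j, and let z_1 ≥ ... ≥ z_k ≥ 0 be real numbers with ∑_{j=1}^k z_j = 1. Then the vector (−γ, ..., −γ, x_{k+1}, ..., x_n) (with k copies of −γ) is majorized by the vector (x_1 − z_1, ..., x_k − z_k, x_{k+1}, ..., x_n). -/

import Mathlib

open BigOperators Finset

/-- `a` is majorized by `b`: for every `r`, the sum of the `r` largest entries of `a`
is at most the sum of the `r` largest entries of `b` (equivalently, every `r`-element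
partial sum of `a` is dominated by some `r`-element partial sum of `b`), and the total
sums agree. -/
def IsMajorizedBy {n : ℕ} (a b : Fin n → ℝ) : Prop :=
  (∀ S : Finset (Fin n), ∃ T : Finset (Fin n), T.card = S.card ∧ ∑ i ∈ S, a i ≤ ∑ i ∈ T, b i)
  ∧ ∑ i, a i = ∑ i, b i


lemma avg_subset {α : Type*} [DecidableEq α] (f : α → ℝ) :
    ∀ s : ℕ, ∀ F : Finset α, s ≤ F.card →
      ∃ T ⊆ F, T.card = s ∧ (s : ℝ) * ∑ i ∈ F, f i ≤ (F.card : ℝ) * ∑ i ∈ T, f i := by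
  intro s
  induction s with
  | zero => intro F _; exact ⟨∅, empty_subset F, card_empty, by simp⟩
  | succ s ih =>
    intro F hs
    have hFne : F.Nonempty := card_pos.mp (lt_of_lt_of_le (Nat.succ_pos s) hs)
    obtain ⟨m, hmF, hm⟩ := Finset.exists_le_of_sum_le (f := fun _ => ∑ j ∈ F, f j)
      (g := fun i => (F.card : ℝ) * f i) hFne
      (by rw [Finset.sum_const, ← Finset.mul_sum, nsmul_eq_mul])
    obtain ⟨T', hT'sub, hT'card, hT'⟩ := ih (F.erase m)
      (by rw [card_erase_of_mem hmF]; omega)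
    have hmT' : m ∉ T' := fun h => (Finset.mem_erase.mp (hT'sub h)).1 rfl
    refine ⟨insert m T', Finset.insert_subset hmF (hT'sub.trans (Finset.erase_subset m F)), ?_, ?_⟩
    · rw [Finset.card_insert_of_notMem hmT', hT'card]
    · rw [Finset.sum_insert hmT']
      rw [Finset.sum_erase_eq_sub hmF, card_erase_of_mem hmF] at hT'
      rcases Nat.lt_or_ge 1 F.card with hc | hc
      · have hcast : ((F.card - 1 : ℕ) : ℝ) = (F.card : ℝ) - 1 := by
          have : 1 ≤ F.card := le_of_lt hc
          push_cast [this]; ring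
        rw [hcast] at hT'
        have hsc : ((s : ℝ) + 1) ≤ (F.card : ℝ) := by exact_mod_cast hs
        have hc2 : (2 : ℝ) ≤ (F.card : ℝ) := by exact_mod_cast hc
        push_cast
        nlinarith [mul_nonneg (sub_nonneg.mpr hsc) (sub_nonneg.mpr hm),
          mul_le_mul_of_nonneg_left hT' (by positivity : (0:ℝ) ≤ (F.card : ℝ))]
      · have hc1 : F.card = 1 := le_antisymm hc (Nat.one_le_iff_ne_zero.mpr
          (fun h => by simp [Finset.card_eq_zero.mp h] at hmF))
        have hs0 : s = 0 := by omega
        have hT'e : T' = ∅ := Finset.card_eq_zero.mp (by rw [hT'card, hs0])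
        subst hs0
        rw [hT'e]
        simp only [Finset.sum_empty, hc1] at *
        push_cast at hm ⊢
        linarith

theorem stmt_0 (n k : ℕ) (hk1 : 1 ≤ k) (hkn : k ≤ n)
    (x : Fin n → ℝ) (hxsort : ∀ i j : Fin n, i ≤ j → x j ≤ x i)
    (hxnn : ∀ i, 0 ≤ x i) (hxsum : ∑ i, x i = 1)
    (z : Fin k → ℝ) (hzsort : ∀ i j : Fin k, i ≤ j → z j ≤ z i)
    (hznn : ∀ i, 0 ≤ z i) (hzsum : ∑ i, z i = 1)
    (γ : ℝ) (hγ : γ = (1 / (k : ℝ)) * ∑ i ∈ Finset.univ.filter (fun i : Fin n => k ≤ (i : ℕ)), x i) :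
    IsMajorizedBy
      (fun i : Fin n => if (i : ℕ) < k then -γ else x i)
      (fun i : Fin n => if h : (i : ℕ) < k then x i - z ⟨(i : ℕ), h⟩ else x i) := by
  set a : Fin n → ℝ := fun i : Fin n => if (i : ℕ) < k then -γ else x i with ha
  set b : Fin n → ℝ := fun i : Fin n => if h : (i : ℕ) < k then x i - z ⟨(i : ℕ), h⟩ else x i with hb
  have hk0 : (0:ℝ) < (k:ℝ) := by exact_mod_cast hk1
  set F : Finset (Fin n) := univ.filter (fun i : Fin n => (i:ℕ) < k) with hF
  -- F as image of Fin k
  have hFmap : F = (univ : Finset (Fin k)).map (Fin.castLEEmb hkn) := by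
    ext i
    simp only [hF, mem_filter, mem_univ, true_and, mem_map, Fin.castLEEmb]
    constructor
    · intro h; exact ⟨⟨(i:ℕ), h⟩, by simp [Fin.castLE]⟩
    · rintro ⟨j, -, rfl⟩; exact j.2
  have hFcard : F.card = k := by rw [hFmap]; simp
  -- sum of b over F
  have hzsum' : ∑ i ∈ F, b i = (∑ i ∈ F, x i) - 1 := by
    rw [hFmap, Finset.sum_map, Finset.sum_map, ← hzsum]
    rw [← Finset.sum_sub_distrib]
    apply Finset.sum_congr rfl
    intro j _
    simp only [hb, Fin.castLEEmb, Function.Embedding.coeFn_mk]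
    rw [dif_pos (by exact j.2 : ((Fin.castLE hkn j : Fin n) : ℕ) < k)]
    congr 1
  -- k * γ = 1 - ∑ F x
  have hcompl : Finset.univ.filter (fun i : Fin n => k ≤ (i : ℕ)) =
      Finset.univ.filter (fun i : Fin n => ¬ (i:ℕ) < k) := by
    apply Finset.filter_congr; intro i _; simp [Nat.not_lt]
  have hsplit : ∑ i ∈ F, x i + ∑ i ∈ Finset.univ.filter (fun i : Fin n => k ≤ (i : ℕ)), x i = 1 := by
    rw [hcompl, ← hxsum, hF]; exact Finset.sum_filter_add_sum_filter_not _ _ _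
  have hkγ : (k:ℝ) * γ = 1 - ∑ i ∈ F, x i := by
    rw [hγ]; field_simp; linarith
  have hsplit' : ∑ i ∈ F, x i + ∑ i ∈ univ.filter (fun i : Fin n => ¬ (i:ℕ) < k), x i = 1 := by
    rw [← hxsum, hF]; exact Finset.sum_filter_add_sum_filter_not _ _ _
  have hFb : ∑ i ∈ F, b i = -((k:ℝ) * γ) := by rw [hzsum']; linarith
  constructor
  · intro S
    set S1 : Finset (Fin n) := S.filter (fun i => (i:ℕ) < k) with hS1
    set S2 : Finset (Fin n) := S.filter (fun i => ¬ (i:ℕ) < k) with hS2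
    have hS1F : S1 ⊆ F := by
      intro i hi; simp only [hS1, mem_filter] at hi; simp [hF, hi.2]
    have hs1k : S1.card ≤ F.card := Finset.card_le_card hS1F
    obtain ⟨T1, hT1F, hT1card, hT1⟩ := avg_subset b S1.card F hs1k
    rw [hFb, hFcard] at hT1
    have hB1 : -(S1.card : ℝ) * γ ≤ ∑ i ∈ T1, b i := by
      have := hT1
      nlinarith
    have hdisj : Disjoint T1 S2 := by
      rw [Finset.disjoint_left]
      intro i hiT hiS
      have h1 : (i:ℕ) < k := by have := hT1F hiT; simpa [hF] using this
      have h2 : ¬ (i:ℕ) < k := by simpa [hS2] using (Finset.mem_filter.mp hiS).2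
      exact h2 h1
    refine ⟨T1 ∪ S2, ?_, ?_⟩
    · rw [Finset.card_union_of_disjoint hdisj, hT1card, hS1, hS2]
      exact Finset.card_filter_add_card_filter_not _
    · rw [Finset.sum_union hdisj]
      have hSsplit : ∑ i ∈ S, a i = ∑ i ∈ S1, a i + ∑ i ∈ S2, a i :=
        (Finset.sum_filter_add_sum_filter_not S _ a).symm
      have hS1a : ∑ i ∈ S1, a i = -(S1.card : ℝ) * γ := by
        have hconst : ∀ i ∈ S1, a i = -γ := by
          intro i hi
          simp only [ha]
          rw [if_pos (by simpa [hS1] using (Finset.mem_filter.mp hi).2)]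
        rw [Finset.sum_congr rfl hconst, Finset.sum_const, nsmul_eq_mul]
        ring
      have hS2ab : ∑ i ∈ S2, a i = ∑ i ∈ S2, b i := by
        apply Finset.sum_congr rfl
        intro i hi
        have h2 : ¬ (i:ℕ) < k := by simpa [hS2] using (Finset.mem_filter.mp hi).2
        simp only [ha, hb, if_neg h2, dif_neg h2]
      rw [hSsplit, hS1a, hS2ab]
      linarith
  · have h1 : ∑ i, a i = ∑ i ∈ F, a i + ∑ i ∈ univ.filter (fun i : Fin n => ¬ (i:ℕ) < k), a i :=
      (Finset.sum_filter_add_sum_filter_not univ _ a).symm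
    have h2 : ∑ i, b i = ∑ i ∈ F, b i + ∑ i ∈ univ.filter (fun i : Fin n => ¬ (i:ℕ) < k), b i :=
      (Finset.sum_filter_add_sum_filter_not univ _ b).symm
    have hFa : ∑ i ∈ F, a i = -((k:ℝ) * γ) := by
      have hconst : ∀ i ∈ F, a i = -γ := by
        intro i hi
        simp only [ha]
        rw [if_pos (by simpa [hF] using hi)]
      rw [Finset.sum_congr rfl hconst, Finset.sum_const, nsmul_eq_mul, hFcard]
      ring
    have hrest : ∀ c : Fin n → ℝ, (∀ i : Fin n, ¬ ((i:ℕ) < k) → c i = x i) →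
        ∑ i ∈ univ.filter (fun i : Fin n => ¬ (i:ℕ) < k), c i
          = ∑ i ∈ univ.filter (fun i : Fin n => ¬ (i:ℕ) < k), x i := by
      intro c hc
      apply Finset.sum_congr rfl
      intro i hi
      exact hc i (by simpa using (Finset.mem_filter.mp hi).2)
    rw [h1, h2, hFa, hFb,
      hrest a (fun i hi => by simp only [ha]; rw [if_neg hi]),
      hrest b (fun i hi => by simp only [hb]; rw [dif_neg hi])]
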